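/- (Theorem 2, covariance part: pPIC equals PIC.) For every block index m, the pPIC predictive covariance equals the centralized PIC predictive covariance: Σ_{U_m U_m} − (Φ_{U_m S}^m Σ_{SS}^{-1} Σ_{S U_m} − Σ_{U_m S} Σ_{SS}^{-1} Σ̇_{S U_m}^m − Φ_{U_m S}^m Σ̈_{SS}^{-1} Φ_{S U_m}^m) − Σ̇_{U_m U_m}^m = Σ_{U_m U_m} − Γ̃_{U_m D} (Γ_{DD} + Λ)^{-1} Γ̃_{D U_m}, where Γ̃_{D U_m} is the transpose of Γ̃_{U_m D}, Φ_{S U_m}^m is the transpose of Φ_{U_m S}^m, and Γ_{DD} + Λ is assumed invertible. -/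

import Mathlib

open Matrix

lemma mul_bd_mul {ι : Type} [Fintype ι] [DecidableEq ι]
    {D : ι → Type} [∀ i, Fintype (D i)] [∀ i, DecidableEq (D i)]
    {α β : Type} [Fintype α] [Fintype β]
    (X : Matrix α ((i : ι) × D i) ℝ) (P : ∀ i, Matrix (D i) (D i) ℝ)
    (Y : Matrix β ((i : ι) × D i) ℝ) :
    X * Matrix.blockDiagonal' P * Yᵀ
      = ∑ i, (Matrix.of fun a d => X a ⟨i, d⟩) * P i * (Matrix.of fun b d => Y b ⟨i, d⟩)ᵀ := by
  ext a b
  simp only [Matrix.mul_apply, Matrix.transpose_apply, Matrix.sum_apply, Matrix.of_apply,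
    Matrix.blockDiagonal'_apply, ← Finset.univ_sigma_univ, Finset.sum_sigma]
  refine Finset.sum_congr rfl fun k _ => Finset.sum_congr rfl fun e _ => ?_
  congr 1
  rw [Fintype.sum_eq_single k]
  · simp
  · intro l hl
    exact Finset.sum_eq_zero fun d _ => by rw [dif_neg hl, mul_zero]

lemma final_algebra {S T DT : Type} [Fintype S] [Fintype T] [Fintype DT] [DecidableEq S]
    (A : Matrix T S ℝ) (K1 Kdd KSS Kd1 : Matrix S S ℝ)
    (B1 : Matrix S DT ℝ) (Qi : Matrix DT DT ℝ) (Ud : Matrix T DT ℝ)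
    (Φ : Matrix T S ℝ) (Φt : Matrix S T ℝ)
    (h1 : K1 * (KSS * (K1 * Aᵀ)) = K1 * Aᵀ)
    (h2 : Kd1 * (Kdd * (K1 * Aᵀ)) = K1 * Aᵀ)
    (h3 : Kdd * (Kd1 * Φt) = Φt)
    (hΦ : Φ = A + A * K1 * (B1 * Qi * B1ᵀ) - Ud * Qi * B1ᵀ)
    (hΦt : Φt = Aᵀ + B1 * (Qi * (B1ᵀ * (K1 * Aᵀ))) - B1 * (Qi * Udᵀ)) :
    (Ud * Qi * Udᵀ + A * K1 * ((Kdd - KSS - B1 * Qi * B1ᵀ) * (K1 * Aᵀ)))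
      - (A * K1 * Kdd - Φ) * (Kd1 * (Kdd * (K1 * Aᵀ) - Φt))
    = Φ * K1 * Aᵀ - A * K1 * (B1 * Qi * Udᵀ) - Φ * Kd1 * Φt + Ud * Qi * Udᵀ := by
  simp only [Matrix.mul_sub, Matrix.sub_mul, Matrix.mul_assoc]
  simp only [h1, h2, h3]
  simp only [hΦ, hΦt]
  simp only [Matrix.mul_add, Matrix.add_mul, Matrix.mul_sub, Matrix.sub_mul, Matrix.mul_assoc]
  abel

set_option maxHeartbeats 2000000 in
theorem stmt_12
    {M : ℕ} (hM : 0 < M)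
    {S : Type} [Fintype S] [DecidableEq S]
    {D : Fin M → Type} [∀ m, Fintype (D m)] [∀ m, DecidableEq (D m)]
    (KSS : Matrix S S ℝ) (hKSSsym : KSSᵀ = KSS) (hKSSinv : IsUnit KSS.det)
    (KSD : ∀ m, Matrix S (D m) ℝ)
    (KDD : ∀ m, Matrix (D m) (D m) ℝ) (hKDDsym : ∀ m, (KDD m)ᵀ = KDD m)
    (Q : ∀ m, Matrix (D m) (D m) ℝ)
    (hQ : ∀ m, Q m = KDD m - (KSD m)ᵀ * KSS⁻¹ * KSD m)
    (hQinv : ∀ m, IsUnit (Q m).det)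
    (Λ : Matrix ((m : Fin M) × D m) ((m : Fin M) × D m) ℝ)
    (hΛ : Λ = Matrix.blockDiagonal' Q)
    (KSDf : Matrix S ((m : Fin M) × D m) ℝ)
    (hKSDf : KSDf = Matrix.of fun s d => KSD d.1 s d.2)
    (Kdd : Matrix S S ℝ)
    (hKdd : Kdd = KSS + ∑ m, KSD m * (Q m)⁻¹ * (KSD m)ᵀ)
    (hKddinv : IsUnit Kdd.det)
    {U : Fin M → Type} [∀ m, Fintype (U m)] [∀ m, DecidableEq (U m)]
    (KUS : ∀ m, Matrix (U m) S ℝ)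
    (KUU : ∀ m, Matrix (U m) (U m) ℝ)
    (KUD : ∀ m, Matrix (U m) (D m) ℝ)
    (tΓ : ∀ m, Matrix (U m) ((k : Fin M) × D k) ℝ)
    (htΓ : ∀ m, tΓ m = Matrix.of fun u d =>
      if h : d.1 = m then KUD m u (cast (congrArg D h) d.2)
      else (KUS m * KSS⁻¹ * KSD d.1) u d.2)
    (Φm : ∀ m, Matrix (U m) S ℝ)
    (hΦm : ∀ m, Φm m = KUS m + KUS m * KSS⁻¹ * (KSD m * (Q m)⁻¹ * (KSD m)ᵀ)
      - KUD m * (Q m)⁻¹ * (KSD m)ᵀ)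
    (ΓDD : Matrix ((m : Fin M) × D m) ((m : Fin M) × D m) ℝ)
    (hΓDD : ΓDD = KSDfᵀ * KSS⁻¹ * KSDf)
    (hGLinv : IsUnit (ΓDD + Λ).det)
    :
    ∀ m, KUU m
        - (Φm m * KSS⁻¹ * (KUS m)ᵀ
           - KUS m * KSS⁻¹ * (KSD m * (Q m)⁻¹ * (KUD m)ᵀ)
           - Φm m * Kdd⁻¹ * (Φm m)ᵀ)
        - KUD m * (Q m)⁻¹ * (KUD m)ᵀ
      = KUU m - tΓ m * (ΓDD + Λ)⁻¹ * (tΓ m)ᵀ := by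
  intro m
  -- basic symmetry facts
  have hK1sym : (KSS⁻¹)ᵀ = KSS⁻¹ := by rw [Matrix.transpose_nonsing_inv, hKSSsym]
  have hQsym : ∀ k, (Q k)ᵀ = Q k := fun k => by
    rw [hQ, transpose_sub, hKDDsym, transpose_mul, transpose_mul, transpose_transpose,
      hK1sym, Matrix.mul_assoc]
  have hQisym : ∀ k, ((Q k)⁻¹)ᵀ = (Q k)⁻¹ := fun k => by
    rw [Matrix.transpose_nonsing_inv, hQsym]
  have hKddsym : Kddᵀ = Kdd := by
    rw [hKdd, transpose_add, hKSSsym]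
    congr 1
    rw [Matrix.transpose_sum]
    refine Finset.sum_congr rfl fun k _ => ?_
    rw [transpose_mul, transpose_mul, transpose_transpose, hQisym, Matrix.mul_assoc]
  -- the inverse Λi of Λ
  set Λi : Matrix ((m : Fin M) × D m) ((m : Fin M) × D m) ℝ :=
    Matrix.blockDiagonal' (fun k => (Q k)⁻¹) with hΛi
  have hΛΛi : Λ * Λi = 1 := by
    rw [hΛ, hΛi, ← Matrix.blockDiagonal'_mul]
    rw [show (fun k => Q k * (Q k)⁻¹) = fun k : Fin M => (1 : Matrix (D k) (D k) ℝ) from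
      funext fun k => Matrix.mul_nonsing_inv _ (hQinv k)]
    exact Matrix.blockDiagonal'_one
  have hΛinv : Λ⁻¹ = Λi := Matrix.inv_eq_right_inv hΛΛi
  have hΛisym : Λiᵀ = Λi := by
    rw [hΛi, Matrix.blockDiagonal'_transpose]
    simp only [hQisym]
  -- the sum identity
  have hFk : ∀ k, (Matrix.of fun s d => KSDf s ⟨k, d⟩) = KSD k := by
    intro k; ext s d; simp [hKSDf]
  have hSsum : KSDf * Λi * KSDfᵀ = ∑ k, KSD k * (Q k)⁻¹ * (KSD k)ᵀ := by
    rw [hΛi, mul_bd_mul]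
    exact Finset.sum_congr rfl fun k _ => by rw [hFk]
  -- Woodbury
  have hΛdet : IsUnit Λ.det := IsUnit.of_mul_eq_one _
    (by rw [← Matrix.det_mul, hΛΛi, Matrix.det_one])
  have hΛunit : IsUnit Λ := (Matrix.isUnit_iff_isUnit_det _).mpr hΛdet
  have hK1unit : IsUnit KSS⁻¹ := (Matrix.isUnit_iff_isUnit_det _).mpr
    (Matrix.isUnit_nonsing_inv_det _ hKSSinv)
  have hmid : KSS⁻¹⁻¹ + KSDf * Λ⁻¹ * KSDfᵀ = Kdd := by
    rw [Matrix.nonsing_inv_nonsing_inv _ hKSSinv, hΛinv, hSsum, hKdd]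
  have hWood : (ΓDD + Λ)⁻¹ = Λi - Λi * KSDfᵀ * Kdd⁻¹ * KSDf * Λi := by
    rw [hΓDD, add_comm, Matrix.add_mul_mul_inv_eq_sub _ _ _ _ hΛunit hK1unit
      (by rw [hmid]; exact (Matrix.isUnit_iff_isUnit_det _).mpr hKddinv), hmid, hΛinv]
  -- block extractions of tΓ
  have hXm : (Matrix.of fun u d => tΓ m u ⟨m, d⟩) = KUD m := by
    ext u d; simp [htΓ m]
  have hXk : ∀ k, k ≠ m → (Matrix.of fun u (d : D k) => tΓ m u ⟨k, d⟩)
      = KUS m * KSS⁻¹ * KSD k := by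
    intro k hk; ext u d; simp [htΓ m, hk]
  have hW : ∑ k ∈ Finset.univ.erase m, KSD k * (Q k)⁻¹ * (KSD k)ᵀ
      = Kdd - KSS - KSD m * (Q m)⁻¹ * (KSD m)ᵀ := by
    have h := Finset.add_sum_erase Finset.univ
      (fun k => KSD k * (Q k)⁻¹ * (KSD k)ᵀ) (Finset.mem_univ m)
    rw [hKdd, ← h]; abel
  have hB : tΓ m * Λi * KSDfᵀ = KUS m * KSS⁻¹ * Kdd - Φm m := by
    rw [hΛi, mul_bd_mul, ← Finset.add_sum_erase Finset.univ _ (Finset.mem_univ m),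
      hXm, hFk m]
    have hterm : ∀ k ∈ Finset.univ.erase m,
        (Matrix.of fun u (d : D k) => tΓ m u ⟨k, d⟩) * (Q k)⁻¹
            * (Matrix.of fun s (d : D k) => KSDf s ⟨k, d⟩)ᵀ
          = KUS m * KSS⁻¹ * (KSD k * (Q k)⁻¹ * (KSD k)ᵀ) := by
      intro k hk
      rw [hXk k (Finset.ne_of_mem_erase hk), hFk k]
      simp only [Matrix.mul_assoc]
    rw [Finset.sum_congr rfl hterm, ← Matrix.mul_sum, hW, hΦm]
    have hcan : KUS m * KSS⁻¹ * KSS = KUS m := by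
      rw [Matrix.mul_assoc, Matrix.nonsing_inv_mul _ hKSSinv, Matrix.mul_one]
    rw [Matrix.mul_sub, Matrix.mul_sub, hcan]
    abel
  have hT1 : tΓ m * Λi * (tΓ m)ᵀ
      = KUD m * (Q m)⁻¹ * (KUD m)ᵀ
        + KUS m * KSS⁻¹ * ((Kdd - KSS - KSD m * (Q m)⁻¹ * (KSD m)ᵀ)
            * (KSS⁻¹ * (KUS m)ᵀ)) := by
    rw [hΛi, mul_bd_mul, ← Finset.add_sum_erase Finset.univ _ (Finset.mem_univ m), hXm]
    congr 1
    have hterm : ∀ k ∈ Finset.univ.erase m,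
        (Matrix.of fun u (d : D k) => tΓ m u ⟨k, d⟩) * (Q k)⁻¹
            * (Matrix.of fun u (d : D k) => tΓ m u ⟨k, d⟩)ᵀ
          = KUS m * KSS⁻¹ * ((KSD k * (Q k)⁻¹ * (KSD k)ᵀ) * (KSS⁻¹ * (KUS m)ᵀ)) := by
      intro k hk
      rw [hXk k (Finset.ne_of_mem_erase hk)]
      simp only [transpose_mul, hK1sym, Matrix.mul_assoc]
    rw [Finset.sum_congr rfl hterm, ← Matrix.mul_sum, ← Matrix.sum_mul, hW]
  have hBt : KSDf * (Λi * (tΓ m)ᵀ) = Kdd * (KSS⁻¹ * (KUS m)ᵀ) - (Φm m)ᵀ := by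
    have h := congrArg Matrix.transpose hB
    simp only [transpose_mul, Matrix.transpose_sub, transpose_transpose, hΛisym, hK1sym,
      hKddsym, Matrix.mul_assoc] at h
    exact h
  have hΦtm : (Φm m)ᵀ = (KUS m)ᵀ
      + KSD m * ((Q m)⁻¹ * ((KSD m)ᵀ * (KSS⁻¹ * (KUS m)ᵀ)))
      - KSD m * ((Q m)⁻¹ * (KUD m)ᵀ) := by
    rw [hΦm]
    simp only [Matrix.transpose_sub, Matrix.transpose_add, transpose_mul,
      transpose_transpose, hK1sym, hQisym, Matrix.mul_assoc]
  have c1 : KSS⁻¹ * (KSS * (KSS⁻¹ * (KUS m)ᵀ)) = KSS⁻¹ * (KUS m)ᵀ := by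
    rw [← Matrix.mul_assoc, Matrix.nonsing_inv_mul _ hKSSinv, Matrix.one_mul]
  have c2 : Kdd⁻¹ * (Kdd * (KSS⁻¹ * (KUS m)ᵀ)) = KSS⁻¹ * (KUS m)ᵀ := by
    rw [← Matrix.mul_assoc, Matrix.nonsing_inv_mul _ hKddinv, Matrix.one_mul]
  have c4 : Kdd * (Kdd⁻¹ * (Φm m)ᵀ) = (Φm m)ᵀ := by
    rw [← Matrix.mul_assoc, Matrix.mul_nonsing_inv _ hKddinv, Matrix.one_mul]
  have key : tΓ m * (Λi - Λi * KSDfᵀ * Kdd⁻¹ * KSDf * Λi) * (tΓ m)ᵀ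
      = Φm m * KSS⁻¹ * (KUS m)ᵀ
        - KUS m * KSS⁻¹ * (KSD m * (Q m)⁻¹ * (KUD m)ᵀ)
        - Φm m * Kdd⁻¹ * (Φm m)ᵀ
        + KUD m * (Q m)⁻¹ * (KUD m)ᵀ := by
    calc tΓ m * (Λi - Λi * KSDfᵀ * Kdd⁻¹ * KSDf * Λi) * (tΓ m)ᵀ
        = tΓ m * Λi * (tΓ m)ᵀ
          - (tΓ m * Λi * KSDfᵀ) * (Kdd⁻¹ * (KSDf * (Λi * (tΓ m)ᵀ))) := by
          simp only [Matrix.mul_sub, Matrix.sub_mul, Matrix.mul_assoc]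
      _ = (KUD m * (Q m)⁻¹ * (KUD m)ᵀ
            + KUS m * KSS⁻¹ * ((Kdd - KSS - KSD m * (Q m)⁻¹ * (KSD m)ᵀ)
                * (KSS⁻¹ * (KUS m)ᵀ)))
          - (KUS m * KSS⁻¹ * Kdd - Φm m)
              * (Kdd⁻¹ * (Kdd * (KSS⁻¹ * (KUS m)ᵀ) - (Φm m)ᵀ)) := by
          rw [hT1, hB, hBt]
      _ = Φm m * KSS⁻¹ * (KUS m)ᵀ
            - KUS m * KSS⁻¹ * (KSD m * (Q m)⁻¹ * (KUD m)ᵀ)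
            - Φm m * Kdd⁻¹ * (Φm m)ᵀ
            + KUD m * (Q m)⁻¹ * (KUD m)ᵀ := by
          exact final_algebra (KUS m) KSS⁻¹ Kdd KSS Kdd⁻¹ (KSD m) (Q m)⁻¹
            (KUD m) (Φm m) (Φm m)ᵀ c1 c2 c4 (hΦm m) hΦtm
  rw [hWood, key]
  abel
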